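/- For every partition λ ⊆ δ_n, Σ_{T a super tableau of shape (λ+(1^n))/λ} q^{dinv(T)} z^T = Σ_{S a standard tableau of shape (λ+(1^n))/λ} q^{dinv(S)} Q̃_{n, dd(S)}(z, w), as formal power series in z and w with coefficients in ℕ[q]. -/

import Mathlib

open Classical

namespace HHL

/-- `d_m` of a cell `(i, j)` is `m*i + j`. -/
def dm (m : ℕ) (x : ℕ × ℕ) : ℕ := m * x.1 + x.2

/-- The reverse diagonal lexicographic order `x <_d y`. -/
def dLess (m : ℕ) (x y : ℕ × ℕ) : Prop :=
  dm m y < dm m x ∨ (dm m x = dm m y ∧ x.2 < y.2)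

/-- The number of d-inversions contributed by a pair of entries with the smaller
entry at the cell `x = (i,j)` and the larger entry at the cell `y = (i',j')`:
`max (0, m - |d_m(y) - d_m(x)|)` if `j > j'`, and
`max (0, m - |d_m(y) - d_m(x) - 1|)` if `j < j'`. -/
def contrib (m : ℕ) (x y : ℕ × ℕ) : ℕ :=
  if y.2 < x.2 then ((m : ℤ) - |(dm m y : ℤ) - (dm m x : ℤ)|).toNat
  else if x.2 < y.2 then ((m : ℤ) - |(dm m y : ℤ) - (dm m x : ℤ) - 1|).toNat
  else 0

/-- `lam` is (the row-length function of) a partition with at most `n` parts whose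
Young diagram is contained in the staircase `m·δ_n = (m(n-1), m(n-2), …, m, 0)`. -/
def IsShape (m n : ℕ) (lam : Fin n → ℕ) : Prop :=
  (∀ i j : Fin n, i ≤ j → lam j ≤ lam i) ∧
  ∀ i : Fin n, lam i ≤ m * (n - 1 - (i : ℕ))

/-- The cell `x_i = (i, λ_{i+1})` of the vertical strip `(λ+(1^n))/λ`. -/
def cell {n : ℕ} (lam : Fin n → ℕ) (i : Fin n) : ℕ × ℕ := ((i : ℕ), lam i)

/-- The cells `x_i` and `x_j` are (consecutive cells) in the same column. -/
def SameCol {n : ℕ} (lam : Fin n → ℕ) (i j : Fin n) : Prop :=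
  (i : ℕ) + 1 = (j : ℕ) ∧ lam i = lam j

/-- A semistandard tableau of the vertical strip `(λ+(1^n))/λ`: entries are
positive integers, strictly increasing up each column. -/
def IsSSYT {n : ℕ} (lam : Fin n → ℕ) (T : Fin n → ℕ) : Prop :=
  (∀ i, 1 ≤ T i) ∧ ∀ i j : Fin n, SameCol lam i j → T i < T j

/-- `T` has content `μ`: there are `μ_a` entries equal to `a` (the list `μ` is
indexed from `0`, so `μ.getD (a-1) 0` is the multiplicity of the letter `a ≥ 1`). -/
def HasContent {n : ℕ} (T : Fin n → ℕ) (μ : List ℕ) : Prop :=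
  ∀ a : ℕ, Set.ncard {i : Fin n | T i = a + 1} = μ.getD a 0

/-- An admissible ordered pair of cells `(x, y)`, `x = (i,j)`, `y = (i',j')`:
either (i) `d(y) = d(x)` and `j > j'`, or (ii) `d(y) = d(x) + 1` and `j < j'`. -/
def Admissible (x y : ℕ × ℕ) : Prop :=
  (y.1 + y.2 = x.1 + x.2 ∧ y.2 < x.2) ∨ (y.1 + y.2 = x.1 + x.2 + 1 ∧ x.2 < y.2)

/-- The number of d-inversions of a tableau of the vertical strip (`m = 1`):
admissible pairs of cells `(x,y)` with `T(x) < T(y)`. -/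
noncomputable def dinv {n : ℕ} (lam : Fin n → ℕ) (T : Fin n → ℕ) : ℕ :=
  Set.ncard {p : Fin n × Fin n |
    Admissible (cell lam p.1) (cell lam p.2) ∧ T p.1 < T p.2}

/-- The statistic `dinv_m` of a (semistandard) tableau of the vertical strip:
each pair of unequal entries contributes `contrib` with the smaller entry first;
each pair of equal entries contributes as would a pair of unequal entries with
the smaller entry at the `<_d`-smaller of the two cells. -/
noncomputable def dinvm (m : ℕ) {n : ℕ} (lam : Fin n → ℕ) (T : Fin n → ℕ) : ℕ :=
  ∑ p : Fin n × Fin n,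
    if T p.1 < T p.2 then contrib m (cell lam p.1) (cell lam p.2)
    else if T p.1 = T p.2 ∧ p.1 < p.2 then
      (if dLess m (cell lam p.1) (cell lam p.2) then
        contrib m (cell lam p.1) (cell lam p.2)
      else contrib m (cell lam p.2) (cell lam p.1))
    else 0

/-- A standard tableau of the vertical strip: a semistandard tableau which is a
bijection onto `{1, …, n}`. -/
def IsStandard {n : ℕ} (lam : Fin n → ℕ) (S : Fin n → ℕ) : Prop :=
  IsSSYT lam S ∧ Function.Injective S ∧ ∀ i, S i ≤ n

/-- The set of d-descents of a standard tableau `S`: letters `a` such that the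
cells `x`, `y` with `S(x) = a`, `S(y) = a + 1` satisfy `x >_d y`. -/
def ddSet (m : ℕ) {n : ℕ} (lam : Fin n → ℕ) (S : Fin n → ℕ) : Set ℕ :=
  {a | ∃ i j : Fin n, S i = a ∧ S j = a + 1 ∧ dLess m (cell lam j) (cell lam i)}


/-- The super alphabet `A± = {1 < 1̄ < 2 < 2̄ < ⋯}` is encoded by natural
numbers `≥ 2`: the positive letter `a` is `2a` and the negative letter `ā`
is `2a + 1` (so odd codes are the negative letters, and the usual order on
`ℕ` is the order of `A±`). -/
def IsNeg (a : ℕ) : Prop := a % 2 = 1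

/-- A super tableau of the vertical strip `(λ+(1^n))/λ`: entries in `A±`,
weakly increasing up each column with equal consecutive entries in a column
allowed only for negative letters. -/
def IsSuperStrip {n : ℕ} (lam : Fin n → ℕ) (T : Fin n → ℕ) : Prop :=
  (∀ i, 2 ≤ T i) ∧
  ∀ i j : Fin n, SameCol lam i j → (T i < T j ∨ (T i = T j ∧ T i % 2 = 1))

/-- The number of occurrences of the positive letter `b+1` in `T`. -/
noncomputable def zCont {n : ℕ} (T : Fin n → ℕ) (b : ℕ) : ℕ :=
  Set.ncard {i : Fin n | T i = 2 * (b + 1)}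

/-- The number of occurrences of the negative letter `(b+1)‾` in `T`. -/
noncomputable def wCont {n : ℕ} (T : Fin n → ℕ) (b : ℕ) : ℕ :=
  Set.ncard {i : Fin n | T i = 2 * (b + 1) + 1}

/-- A weakly increasing word `a_1 ≤ ⋯ ≤ a_n` in the super alphabet such that
equal consecutive positive letters avoid `D` and equal consecutive negative
letters occur at positions of `D`; these index the monomials of the super
quasisymmetric function `Q̃_{n,D}(z,w)`. -/
def IsSuperWord (n : ℕ) (D : Set ℕ) (a : Fin n → ℕ) : Prop :=
  (∀ i, 2 ≤ a i) ∧ Monotone a ∧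
  ∀ (k : ℕ) (h1 : k < n) (h2 : k + 1 < n),
    a ⟨k, h1⟩ = a ⟨k + 1, h2⟩ →
      ((a ⟨k, h1⟩ % 2 = 0 → (k + 1) ∉ D) ∧ (a ⟨k, h1⟩ % 2 = 1 → (k + 1) ∈ D))

/-- Super `dinv` (`m = 1`): admissible pairs of cells `(x, y)` with
`T(x) < T(y)`, or `T(x) = T(y)` a negative letter. -/
noncomputable def sdinv {n : ℕ} (lam : Fin n → ℕ) (T : Fin n → ℕ) : ℕ :=
  Set.ncard {p : Fin n × Fin n |
    Admissible (cell lam p.1) (cell lam p.2) ∧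
      (T p.1 < T p.2 ∨ (T p.1 = T p.2 ∧ T p.1 % 2 = 1))}

section Aux

variable {n : ℕ} {lam : Fin n → ℕ}

/-- Encoding of the `<_d` order on the cells of the strip as a natural number. -/
def dp (n : ℕ) (lam : Fin n → ℕ) (i : Fin n) : ℕ :=
  (n - 1 - ((i : ℕ) + lam i)) * n + lam i

/-- The key used for standardization. -/
def keyf (n : ℕ) (lam : Fin n → ℕ) (T : Fin n → ℕ) (i : Fin n) : ℕ :=
  T i * n ^ 2 + (if T i % 2 = 0 then dp n lam i else n ^ 2 - 1 - dp n lam i)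

/-- The standardization of a tableau. -/
noncomputable def std (n : ℕ) (lam : Fin n → ℕ) (T : Fin n → ℕ) (i : Fin n) : ℕ :=
  1 + (Finset.univ.filter fun j => keyf n lam T j < keyf n lam T i).card

/-- Inverse of the standardization. -/
noncomputable def pinv (n : ℕ) (lam : Fin n → ℕ) (T : Fin n → ℕ) (k : Fin n) : Fin n :=
  if h : ∃ i, std n lam T i = (k : ℕ) + 1 then h.choose else k

/-- The weakly increasing word of a tableau. -/
noncomputable def wrd (n : ℕ) (lam : Fin n → ℕ) (T : Fin n → ℕ) (k : Fin n) : ℕ :=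
  T (pinv n lam T k)

lemma mul_helper {A B x y N : ℕ} (h : A < B) (hx : x < N) : A * N + x < B * N + y := by
  have h1 : A * N + x < (A + 1) * N := by
    have : (A + 1) * N = A * N + N := by ring
    omega
  have h2 : (A + 1) * N ≤ B * N := Nat.mul_le_mul_right N h
  omega

lemma add_mul_inj {A B x y N : ℕ} (h : A * N + x = B * N + y) (hx : x < N) (hy : y < N) :
    A = B ∧ x = y := by
  rcases lt_trichotomy A B with h1 | h1 | h1
  · exact absurd h (Nat.ne_of_lt (mul_helper h1 hx))
  · subst h1; omega
  · exact absurd h.symm (Nat.ne_of_lt (mul_helper h1 hy))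

lemma d_le (hlam : IsShape 1 n lam) (i : Fin n) : (i : ℕ) + lam i ≤ n - 1 := by
  have h1 := hlam.2 i
  have h2 := i.isLt
  omega

lemma lam_lt (hlam : IsShape 1 n lam) (i : Fin n) : lam i < n := by
  have h1 := hlam.2 i
  have h2 := i.isLt
  omega

lemma dp_lt (hlam : IsShape 1 n lam) (i : Fin n) : dp n lam i < n ^ 2 := by
  have h1 : n - 1 - ((i : ℕ) + lam i) ≤ n - 1 := Nat.sub_le _ _
  have h2 := lam_lt hlam i
  have h3 : (n - 1 - ((i : ℕ) + lam i)) * n ≤ (n - 1) * n := Nat.mul_le_mul_right n h1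
  have h4 : 1 ≤ n := i.pos
  have h6 : n ^ 2 = (n - 1) * n + n := by
    obtain ⟨m, rfl⟩ : ∃ m, n = m + 1 := ⟨n - 1, by omega⟩
    simp only [Nat.add_sub_cancel]
    ring
  simp only [dp]
  omega

lemma dLess_iff_dp (hlam : IsShape 1 n lam) (i j : Fin n) :
    dLess 1 (cell lam i) (cell lam j) ↔ dp n lam i < dp n lam j := by
  have hdi := d_le hlam i
  have hdj := d_le hlam j
  have hli := lam_lt hlam i
  have hlj := lam_lt hlam j
  simp only [dLess, dm, cell, one_mul, dp]
  constructor
  · rintro (h | ⟨h1, h2⟩)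
    · exact mul_helper (by omega) hli
    · rw [show n - 1 - ((i : ℕ) + lam i) = n - 1 - ((j : ℕ) + lam j) by omega]
      omega
  · intro h
    rcases lt_trichotomy ((j : ℕ) + lam j) ((i : ℕ) + lam i) with h1 | h1 | h1
    · exact Or.inl h1
    · refine Or.inr ⟨h1.symm, ?_⟩
      rw [show n - 1 - ((i : ℕ) + lam i) = n - 1 - ((j : ℕ) + lam j) by omega] at h
      omega
    · exact absurd (mul_helper (y := lam i) (show n - 1 - ((j : ℕ) + lam j) < n - 1 - ((i : ℕ) + lam i) by omega) hlj) (by omega)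

lemma dp_inj (hlam : IsShape 1 n lam) {i j : Fin n} (h : dp n lam i = dp n lam j) : i = j := by
  have hdi := d_le hlam i
  have hdj := d_le hlam j
  obtain ⟨h1, h2⟩ := add_mul_inj h (lam_lt hlam i) (lam_lt hlam j)
  have : (i : ℕ) = (j : ℕ) := by omega
  exact Fin.ext this

lemma admissible_dp (hlam : IsShape 1 n lam) {i j : Fin n}
    (h : Admissible (cell lam i) (cell lam j)) : dp n lam j < dp n lam i := by
  rw [← dLess_iff_dp hlam]
  simp only [Admissible, cell] at h
  simp only [dLess, dm, cell, one_mul]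
  omega

lemma samecol_dp (hlam : IsShape 1 n lam) {i j : Fin n} (h : SameCol lam i j) :
    dp n lam j < dp n lam i := by
  rw [← dLess_iff_dp hlam]
  obtain ⟨h1, h2⟩ := h
  simp only [dLess, dm, cell, one_mul]
  omega

lemma tail_lt (hlam : IsShape 1 n lam) (T : Fin n → ℕ) (i : Fin n) :
    (if T i % 2 = 0 then dp n lam i else n ^ 2 - 1 - dp n lam i) < n ^ 2 := by
  have h1 := dp_lt hlam i
  split <;> omega

lemma key_lt_of_lt {T : Fin n → ℕ} {i j : Fin n} (hlam : IsShape 1 n lam)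
    (h : T i < T j) : keyf n lam T i < keyf n lam T j :=
  mul_helper h (tail_lt hlam T i)

lemma key_cases (hlam : IsShape 1 n lam) {T : Fin n → ℕ} {i j : Fin n}
    (h : dp n lam j < dp n lam i) :
    (keyf n lam T i < keyf n lam T j ↔ (T i < T j ∨ (T i = T j ∧ T i % 2 = 1))) := by
  have hi := dp_lt hlam i
  have hj := dp_lt hlam j
  rcases lt_trichotomy (T i) (T j) with h1 | h1 | h1
  · exact iff_of_true (key_lt_of_lt hlam h1) (Or.inl h1)
  · have e1 : keyf n lam T i
        = T j * n ^ 2 + (if T j % 2 = 0 then dp n lam i else n ^ 2 - 1 - dp n lam i) := by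
      rw [keyf, h1]
    rw [e1, keyf]
    by_cases h2 : T j % 2 = 0
    · rw [if_pos h2, if_pos h2]
      constructor
      · intro hk; exfalso; omega
      · rintro (hk | ⟨_, hk⟩) <;> omega
    · rw [if_neg h2, if_neg h2]
      constructor
      · intro _; exact Or.inr ⟨h1, by omega⟩
      · intro _; omega
  · have hgt := key_lt_of_lt hlam h1
    constructor
    · intro hk; omega
    · rintro (hk | ⟨hk, _⟩) <;> omega

lemma key_inj (hlam : IsShape 1 n lam) {T : Fin n → ℕ} {i j : Fin n}
    (h : keyf n lam T i = keyf n lam T j) : i = j := by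
  obtain ⟨h1, h2⟩ := add_mul_inj h (tail_lt hlam T i) (tail_lt hlam T j)
  have hi := dp_lt hlam i
  have hj := dp_lt hlam j
  apply dp_inj hlam
  by_cases hp : T i % 2 = 0
  · rw [if_pos hp, if_pos (show T j % 2 = 0 by omega)] at h2; exact h2
  · rw [if_neg hp, if_neg (show ¬ T j % 2 = 0 by omega)] at h2; omega

lemma key_le_T (hlam : IsShape 1 n lam) {T : Fin n → ℕ} {i j : Fin n}
    (h : keyf n lam T i < keyf n lam T j) : T i ≤ T j := by
  by_contra hc
  have := key_lt_of_lt hlam (show T j < T i by omega)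
  omega

end Aux


section Aux2

variable {n : ℕ} {lam : Fin n → ℕ}

lemma std_lt_of_key {T : Fin n → ℕ} {i j : Fin n}
    (h : keyf n lam T i < keyf n lam T j) : std n lam T i < std n lam T j := by
  have hsub : (Finset.univ.filter fun m => keyf n lam T m < keyf n lam T i) ⊂
      (Finset.univ.filter fun m => keyf n lam T m < keyf n lam T j) := by
    constructor
    · intro m hm
      simp only [Finset.mem_filter, Finset.mem_univ, true_and] at hm ⊢
      omega
    · intro hc
      have := hc (Finset.mem_filter.mpr ⟨Finset.mem_univ i, h⟩)
      simp only [Finset.mem_filter, Finset.mem_univ, true_and] at this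
      omega
  have := Finset.card_lt_card hsub
  simp only [std]
  omega

lemma std_lt_iff (hlam : IsShape 1 n lam) {T : Fin n → ℕ} {i j : Fin n} :
    std n lam T i < std n lam T j ↔ keyf n lam T i < keyf n lam T j := by
  constructor
  · intro h
    rcases lt_trichotomy (keyf n lam T i) (keyf n lam T j) with h1 | h1 | h1
    · exact h1
    · exact absurd (key_inj hlam h1) (by rintro rfl; omega)
    · exact absurd (std_lt_of_key h1) (by omega)
  · exact std_lt_of_key

lemma std_pos (T : Fin n → ℕ) (i : Fin n) : 1 ≤ std n lam T i := Nat.le_add_right 1 _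

lemma std_le (T : Fin n → ℕ) (i : Fin n) : std n lam T i ≤ n := by
  have hne : (Finset.univ.filter fun m => keyf n lam T m < keyf n lam T i) ≠ Finset.univ := by
    intro hc
    have : i ∈ Finset.univ.filter fun m => keyf n lam T m < keyf n lam T i := by
      rw [hc]; exact Finset.mem_univ i
    simp only [Finset.mem_filter] at this
    omega
  have := Finset.card_lt_card (Finset.ssubset_univ_iff.mpr hne)
  simp only [Finset.card_univ, Fintype.card_fin] at this
  simp only [std]
  omega

lemma std_inj (hlam : IsShape 1 n lam) (T : Fin n → ℕ) : Function.Injective (std n lam T) := by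
  intro i j h
  rcases lt_trichotomy (keyf n lam T i) (keyf n lam T j) with h1 | h1 | h1
  · exact absurd (std_lt_of_key (lam := lam) h1) (by omega)
  · exact key_inj hlam h1
  · exact absurd (std_lt_of_key (lam := lam) h1) (by omega)

/-- Generic facts about a bijection `Fin n → {1, …, n}`. -/
lemma rank_surj {S : Fin n → ℕ} (hinj : Function.Injective S) (h1 : ∀ i, 1 ≤ S i)
    (h2 : ∀ i, S i ≤ n) : ∀ k, 1 ≤ k → k ≤ n → ∃ i, S i = k := by
  intro k hk1 hk2
  have hsub : Finset.univ.image S ⊆ Finset.Icc 1 n := by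
    intro v hv
    simp only [Finset.mem_image] at hv
    obtain ⟨i, _, rfl⟩ := hv
    exact Finset.mem_Icc.mpr ⟨h1 i, h2 i⟩
  have hcard : (Finset.Icc 1 n).card ≤ (Finset.univ.image S).card := by
    rw [Finset.card_image_of_injective _ hinj, Finset.card_univ, Fintype.card_fin,
      Nat.card_Icc]
    omega
  have := Finset.eq_of_subset_of_card_le hsub hcard
  have hk : k ∈ Finset.univ.image S := by
    rw [this]; exact Finset.mem_Icc.mpr ⟨hk1, hk2⟩
  simp only [Finset.mem_image] at hk
  obtain ⟨i, _, hi⟩ := hk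
  exact ⟨i, hi⟩

lemma rank_card {S : Fin n → ℕ} (hinj : Function.Injective S) (h1 : ∀ i, 1 ≤ S i)
    (h2 : ∀ i, S i ≤ n) (i : Fin n) :
    (Finset.univ.filter fun j => S j < S i).card = S i - 1 := by
  have himg : (Finset.univ.filter fun j => S j < S i).image S = Finset.Ico 1 (S i) := by
    apply Finset.ext
    intro v
    simp only [Finset.mem_image, Finset.mem_filter, Finset.mem_univ, true_and,
      Finset.mem_Ico]
    constructor
    · rintro ⟨j, hj, rfl⟩; exact ⟨h1 j, hj⟩
    · rintro ⟨hv1, hv2⟩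
      obtain ⟨j, hj⟩ := rank_surj hinj h1 h2 v hv1 (le_trans (le_of_lt hv2) (h2 i))
      exact ⟨j, by omega, hj⟩
  have := congrArg Finset.card himg
  rw [Finset.card_image_of_injective _ hinj, Nat.card_Ico] at this
  omega

lemma pinv_spec (hlam : IsShape 1 n lam) (T : Fin n → ℕ) (k : Fin n) :
    std n lam T (pinv n lam T k) = (k : ℕ) + 1 := by
  have hex : ∃ i, std n lam T i = (k : ℕ) + 1 := by
    apply rank_surj (std_inj hlam T) (std_pos T) (std_le T)
    · omega
    · exact k.isLt
  rw [pinv, dif_pos hex]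
  exact hex.choose_spec

lemma pinv_inj (hlam : IsShape 1 n lam) (T : Fin n → ℕ) :
    Function.Injective (pinv n lam T) := by
  intro k k' h
  have h1 := pinv_spec hlam T k
  have h2 := pinv_spec hlam T k'
  rw [h] at h1
  exact Fin.ext (by omega)

lemma pinv_bij (hlam : IsShape 1 n lam) (T : Fin n → ℕ) :
    Function.Bijective (pinv n lam T) :=
  Finite.injective_iff_bijective.mp (pinv_inj hlam T)

lemma pinv_std (hlam : IsShape 1 n lam) (T : Fin n → ℕ) (i : Fin n)
    (h : std n lam T i - 1 < n) : pinv n lam T ⟨std n lam T i - 1, h⟩ = i := by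
  apply std_inj hlam T
  rw [pinv_spec hlam T]
  have := std_pos (lam := lam) T i
  simp only []
  omega

/-- `T` is recovered from its standardization and word. -/
lemma wrd_std (hlam : IsShape 1 n lam) (T : Fin n → ℕ) (i : Fin n)
    (h : std n lam T i - 1 < n) : wrd n lam T ⟨std n lam T i - 1, h⟩ = T i := by
  rw [wrd, pinv_std hlam]

lemma ncard_comp_bij {g : Fin n → Fin n} (hg : Function.Bijective g) (P : Fin n → Prop) :
    Set.ncard {i | P (g i)} = Set.ncard {i | P i} := by
  have h1 : {i | P (g i)} = g ⁻¹' {i | P i} := rfl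
  rw [h1, Set.ncard_preimage_of_injective_subset_range hg.injective
    (by rw [Set.range_eq_univ.mpr hg.surjective]; exact Set.subset_univ _)]

end Aux2


section Aux3

variable {n : ℕ} {lam : Fin n → ℕ}

lemma std_sub_lt (T : Fin n → ℕ) (i : Fin n) : std n lam T i - 1 < n := by
  have h1 := std_le (lam := lam) T i
  have h2 := i.isLt
  omega

lemma std_standard (hlam : IsShape 1 n lam) {T : Fin n → ℕ} (hT : IsSuperStrip lam T) :
    IsStandard lam (std n lam T) := by
  refine ⟨⟨fun i => std_pos T i, fun i j hc => ?_⟩, std_inj hlam T, std_le T⟩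
  exact (std_lt_iff hlam).mpr ((key_cases hlam (samecol_dp hlam hc)).mpr (hT.2 i j hc))

lemma std_dinv (hlam : IsShape 1 n lam) (T : Fin n → ℕ) :
    dinv lam (std n lam T) = sdinv lam T := by
  rw [dinv, sdinv]
  congr 1
  ext p
  simp only [Set.mem_setOf_eq]
  refine and_congr_right fun hadm => ?_
  have hdp := admissible_dp hlam hadm
  rw [std_lt_iff hlam]
  exact key_cases hlam hdp

lemma std_superword (hlam : IsShape 1 n lam) {T : Fin n → ℕ} (hT : IsSuperStrip lam T) :
    IsSuperWord n (ddSet 1 lam (std n lam T)) (wrd n lam T) := by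
  refine ⟨fun k => hT.1 _, ?_, ?_⟩
  · intro k k' hkk
    rcases eq_or_lt_of_le hkk with h | h
    · rw [h]
    · have h1 := pinv_spec hlam T k
      have h2 := pinv_spec hlam T k'
      have hstd : std n lam T (pinv n lam T k) < std n lam T (pinv n lam T k') := by
        rw [h1, h2]; exact_mod_cast Nat.add_lt_add_right h 1
      show T (pinv n lam T k) ≤ T (pinv n lam T k')
      exact key_le_T hlam ((std_lt_iff hlam).mp hstd)
  · intro kk h1 h2 heq
    set i := pinv n lam T ⟨kk, h1⟩ with hi
    set j := pinv n lam T ⟨kk + 1, h2⟩ with hj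
    have hsi : std n lam T i = kk + 1 := pinv_spec hlam T _
    have hsj : std n lam T j = kk + 2 := by
      have := pinv_spec hlam T (⟨kk + 1, h2⟩ : Fin n)
      simpa using this
    have hij : i ≠ j := by
      intro e; rw [e, hsj] at hsi; omega
    have hTeq : T i = T j := heq
    have hwi : wrd n lam T ⟨kk, h1⟩ = T i := rfl
    have hwj : wrd n lam T ⟨kk + 1, h2⟩ = T j := rfl
    have hkey : keyf n lam T i < keyf n lam T j := by
      apply (std_lt_iff hlam).mp; omega
    have hdpne : dp n lam i ≠ dp n lam j := fun e => hij (dp_inj hlam e)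
    have hdpij : dp n lam i < dp n lam j ∨ dp n lam j < dp n lam i := by omega
    constructor
    · intro hev hD
      obtain ⟨i', j', hi', hj', hdl⟩ := hD
      have ei : i' = i := std_inj hlam T (by rw [hi', hsi])
      have ej : j' = j := std_inj hlam T (by rw [hj', hsj])
      rw [ei, ej] at hdl
      have hdp : dp n lam j < dp n lam i := (dLess_iff_dp hlam j i).mp hdl
      have := (key_cases hlam hdp).mp hkey
      omega
    · intro hodd
      have hdp : dp n lam j < dp n lam i := by
        rcases hdpij with h | h
        · exfalso
          have := (key_cases hlam (T := T) h).mpr (Or.inr ⟨hTeq.symm, by omega⟩)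
          omega
        · exact h
      exact ⟨i, j, hsi, by rw [hsj], (dLess_iff_dp hlam j i).mpr hdp⟩

lemma wrd_zCont (hlam : IsShape 1 n lam) (T : Fin n → ℕ) (b : ℕ) :
    zCont (wrd n lam T) b = zCont T b := by
  rw [zCont, zCont]
  exact ncard_comp_bij (pinv_bij hlam T) (fun i => T i = 2 * (b + 1))

lemma wrd_wCont (hlam : IsShape 1 n lam) (T : Fin n → ℕ) (b : ℕ) :
    wCont (wrd n lam T) b = wCont T b := by
  rw [wCont, wCont]
  exact ncard_comp_bij (pinv_bij hlam T) (fun i => T i = 2 * (b + 1) + 1)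

end Aux3


section Aux4

variable {n : ℕ} {lam : Fin n → ℕ} {S a T : Fin n → ℕ}

lemma back_mono (hS : IsStandard lam S) (ha : IsSuperWord n (ddSet 1 lam S) a)
    (hT : ∀ i, ∃ h : S i - 1 < n, T i = a ⟨S i - 1, h⟩) {i j : Fin n}
    (h : S i ≤ S j) : T i ≤ T j := by
  obtain ⟨hi, ei⟩ := hT i
  obtain ⟨hj, ej⟩ := hT j
  rw [ei, ej]
  exact ha.2.1 (show (⟨S i - 1, hi⟩ : Fin n) ≤ ⟨S j - 1, hj⟩ by
    rw [Fin.mk_le_mk]; omega)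

lemma back_step (hlam : IsShape 1 n lam) (hS : IsStandard lam S)
    (ha : IsSuperWord n (ddSet 1 lam S) a)
    (hT : ∀ i, ∃ h : S i - 1 < n, T i = a ⟨S i - 1, h⟩) {i j : Fin n}
    (hsj : S j = S i + 1) (heq : T i = T j) :
    (T i % 2 = 0 → dp n lam i < dp n lam j) ∧ (T i % 2 = 1 → dp n lam j < dp n lam i) := by
  obtain ⟨hi, ei⟩ := hT i
  obtain ⟨hj, ej⟩ := hT j
  have h1i := hS.1.1 i
  have hni := hS.2.2 i
  have hnj := hS.2.2 j
  have hk2 : S i - 1 + 1 < n := by omega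
  have hcond := ha.2.2 (S i - 1) hi hk2 (by
    have hfe : (⟨S i - 1 + 1, hk2⟩ : Fin n) = ⟨S j - 1, hj⟩ := by
      simp only [Fin.mk.injEq]; omega
    rw [hfe, ← ei, ← ej]
    exact heq)
  rw [← ei, show S i - 1 + 1 = S i by omega] at hcond
  have hij : i ≠ j := by intro e; rw [e] at hsj; omega
  have hdpne : dp n lam i ≠ dp n lam j := fun e => hij (dp_inj hlam e)
  have hDiff : (S i ∈ ddSet 1 lam S) ↔ dp n lam j < dp n lam i := by
    constructor
    · rintro ⟨i', j', hi', hj', hdl⟩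
      have e1 : i' = i := hS.2.1 hi'
      have e2 : j' = j := hS.2.1 (by omega)
      rw [e1, e2] at hdl
      exact (dLess_iff_dp hlam j i).mp hdl
    · intro h
      exact ⟨i, j, rfl, by omega, (dLess_iff_dp hlam j i).mpr h⟩
  constructor
  · intro hev
    have hnD := hcond.1 hev
    have : ¬ dp n lam j < dp n lam i := fun hc => hnD (hDiff.mpr hc)
    omega
  · intro hodd
    exact hDiff.mp (hcond.2 hodd)

lemma back_chain (hlam : IsShape 1 n lam) (hS : IsStandard lam S)
    (ha : IsSuperWord n (ddSet 1 lam S) a)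
    (hT : ∀ i, ∃ h : S i - 1 < n, T i = a ⟨S i - 1, h⟩) :
    ∀ (t : ℕ) (i j : Fin n), S j = S i + 1 + t → T i = T j →
    (T i % 2 = 0 → dp n lam i < dp n lam j) ∧ (T i % 2 = 1 → dp n lam j < dp n lam i) := by
  intro t
  induction t with
  | zero =>
    intro i j hsj heq
    exact back_step hlam hS ha hT (by omega) heq
  | succ t ih =>
    intro i j hsj heq
    obtain ⟨m, hm⟩ := rank_surj hS.2.1 hS.1.1 hS.2.2 (S i + 1) (by omega)
      (by have := hS.2.2 j; omega)
    have h1 : T i ≤ T m := back_mono hS ha hT (by omega)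
    have h2 : T m ≤ T j := back_mono hS ha hT (by omega)
    have heq1 : T i = T m := by omega
    have heq2 : T m = T j := by omega
    have hstep := back_step hlam hS ha hT hm heq1
    have hch := ih m j (by omega) heq2
    rw [← heq1] at hch
    constructor
    · intro hev; exact lt_trans (hstep.1 hev) (hch.1 hev)
    · intro hodd; exact lt_trans (hch.2 hodd) (hstep.2 hodd)

lemma back_key_iff (hlam : IsShape 1 n lam) (hS : IsStandard lam S)
    (ha : IsSuperWord n (ddSet 1 lam S) a)
    (hT : ∀ i, ∃ h : S i - 1 < n, T i = a ⟨S i - 1, h⟩) {i j : Fin n} (hij : i ≠ j) :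
    S i < S j ↔ keyf n lam T i < keyf n lam T j := by
  have main : ∀ i' j' : Fin n, i' ≠ j' → S i' < S j' →
      keyf n lam T i' < keyf n lam T j' := by
    intro i' j' hne h
    have hle := back_mono hS ha hT (le_of_lt h)
    rcases eq_or_lt_of_le hle with heq | hlt
    · have hch := back_chain hlam hS ha hT (S j' - S i' - 1) i' j' (by omega) heq
      have hkne : keyf n lam T i' ≠ keyf n lam T j' := fun e => hne (key_inj hlam e)
      rcases Nat.mod_two_eq_zero_or_one (T i') with hp | hp
      · have hdp := hch.1 hp
        have := (key_cases hlam (T := T) hdp)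
        have hno : ¬ keyf n lam T j' < keyf n lam T i' := by
          intro hc
          rcases this.mp hc with h' | ⟨h', hp'⟩ <;> omega
        omega
      · exact (key_cases hlam (hch.2 hp)).mpr (Or.inr ⟨heq, hp⟩)
    · exact key_lt_of_lt hlam hlt
  constructor
  · exact main i j hij
  · intro hk
    rcases lt_trichotomy (S i) (S j) with h | h | h
    · exact h
    · exact absurd (hS.2.1 h) hij
    · have := main j i (Ne.symm hij) h
      omega

lemma back_std (hlam : IsShape 1 n lam) (hS : IsStandard lam S)
    (ha : IsSuperWord n (ddSet 1 lam S) a)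
    (hT : ∀ i, ∃ h : S i - 1 < n, T i = a ⟨S i - 1, h⟩) :
    std n lam T = S := by
  funext i
  have hset : ∀ j, (keyf n lam T j < keyf n lam T i ↔ S j < S i) := by
    intro j
    by_cases h : j = i
    · subst h; exact iff_of_false (lt_irrefl _) (lt_irrefl _)
    · exact (back_key_iff hlam hS ha hT h).symm
  have hfil : (Finset.univ.filter fun j => keyf n lam T j < keyf n lam T i)
      = Finset.univ.filter fun j => S j < S i := by
    apply Finset.filter_congr
    intro j _
    simp only [hset j]
  rw [std, hfil, rank_card hS.2.1 hS.1.1 hS.2.2 i]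
  have := hS.1.1 i
  omega

lemma back_strip (hlam : IsShape 1 n lam) (hS : IsStandard lam S)
    (ha : IsSuperWord n (ddSet 1 lam S) a)
    (hT : ∀ i, ∃ h : S i - 1 < n, T i = a ⟨S i - 1, h⟩) :
    IsSuperStrip lam T := by
  constructor
  · intro i
    obtain ⟨hi, ei⟩ := hT i
    rw [ei]
    exact ha.1 _
  · intro i j hc
    have hij : i ≠ j := by
      intro e
      have := hc.1
      rw [e] at this
      omega
    have hdp := samecol_dp hlam hc
    have hkey := (back_key_iff hlam hS ha hT hij).mp (hS.1.2 i j hc)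
    exact (key_cases hlam hdp).mp hkey

lemma back_sdinv (hlam : IsShape 1 n lam) (hS : IsStandard lam S)
    (ha : IsSuperWord n (ddSet 1 lam S) a)
    (hT : ∀ i, ∃ h : S i - 1 < n, T i = a ⟨S i - 1, h⟩) :
    sdinv lam T = dinv lam S := by
  rw [sdinv, dinv]
  congr 1
  ext p
  simp only [Set.mem_setOf_eq]
  refine and_congr_right fun hadm => ?_
  have hdp := admissible_dp hlam hadm
  have hne : p.1 ≠ p.2 := by
    intro e
    rw [e] at hdp
    omega
  rw [← key_cases hlam (T := T) hdp, ← back_key_iff hlam hS ha hT hne]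

lemma back_wrd (hlam : IsShape 1 n lam) (hS : IsStandard lam S)
    (ha : IsSuperWord n (ddSet 1 lam S) a)
    (hT : ∀ i, ∃ h : S i - 1 < n, T i = a ⟨S i - 1, h⟩) :
    wrd n lam T = a := by
  funext k
  have hsp := pinv_spec hlam T k
  rw [back_std hlam hS ha hT] at hsp
  obtain ⟨h, e⟩ := hT (pinv n lam T k)
  rw [wrd, e]
  exact congrArg a (Fin.ext (by simp only []; omega))

end Aux4


/-- `Σ_{T super} q^{dinv(T)} z^T = Σ_{S standard} q^{dinv(S)} Q̃_{n,dd(S)}(z,w)`,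
stated coefficientwise: the coefficient of `q^k z^c w^{c'}` on the left counts
super tableaux, and on the right counts pairs of a standard tableau `S` (with
`dinv S = k`) and a monomial word of `Q̃_{n,dd(S)}` of content `(c, c')`. -/
theorem statement3 (n : ℕ) (hn : 1 ≤ n) (lam : Fin n → ℕ) (hlam : IsShape 1 n lam)
    (c c' : ℕ → ℕ) (k : ℕ) :
    Set.ncard {T : Fin n → ℕ | IsSuperStrip lam T ∧ sdinv lam T = k ∧
      (∀ b, zCont T b = c b) ∧ (∀ b, wCont T b = c' b)} =
    Set.ncard {Sa : (Fin n → ℕ) × (Fin n → ℕ) |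
      IsStandard lam Sa.1 ∧ dinv lam Sa.1 = k ∧
      IsSuperWord n (ddSet 1 lam Sa.1) Sa.2 ∧
      (∀ b, zCont Sa.2 b = c b) ∧ (∀ b, wCont Sa.2 b = c' b)} := by
  classical
  set F : (Fin n → ℕ) → (Fin n → ℕ) × (Fin n → ℕ) :=
    fun T => (std n lam T, wrd n lam T) with hF
  have hFinj : Function.Injective F := by
    intro T T' h
    simp only [hF, Prod.mk.injEq] at h
    obtain ⟨h1, h2⟩ := h
    funext i
    have e1 := wrd_std hlam T i (std_sub_lt T i)
    have e2 := wrd_std hlam T' i (std_sub_lt T' i)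
    rw [← e1, ← e2, h2]
    refine congrArg _ (Fin.ext ?_)
    simp only []
    rw [h1]
  have himg : F '' {T : Fin n → ℕ | IsSuperStrip lam T ∧ sdinv lam T = k ∧
      (∀ b, zCont T b = c b) ∧ (∀ b, wCont T b = c' b)} =
      {Sa : (Fin n → ℕ) × (Fin n → ℕ) |
        IsStandard lam Sa.1 ∧ dinv lam Sa.1 = k ∧
        IsSuperWord n (ddSet 1 lam Sa.1) Sa.2 ∧
        (∀ b, zCont Sa.2 b = c b) ∧ (∀ b, wCont Sa.2 b = c' b)} := by
    ext Sa
    simp only [Set.mem_image, Set.mem_setOf_eq]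
    constructor
    · rintro ⟨T, ⟨hstrip, hdinv, hz, hw⟩, rfl⟩
      simp only [hF]
      refine ⟨std_standard hlam hstrip, ?_, std_superword hlam hstrip, ?_, ?_⟩
      · rw [std_dinv hlam]; exact hdinv
      · intro b; rw [wrd_zCont hlam]; exact hz b
      · intro b; rw [wrd_wCont hlam]; exact hw b
    · rintro ⟨hS, hdinv, ha, hz, hw⟩
      have hTlt : ∀ i : Fin n, Sa.1 i - 1 < n := by
        intro i
        have := hS.2.2 i
        omega
      set T : Fin n → ℕ := fun i => Sa.2 ⟨Sa.1 i - 1, hTlt i⟩ with hTdef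
      have hTp : ∀ i, ∃ h : Sa.1 i - 1 < n, T i = Sa.2 ⟨Sa.1 i - 1, h⟩ :=
        fun i => ⟨hTlt i, rfl⟩
      refine ⟨T, ⟨back_strip hlam hS ha hTp, ?_, ?_, ?_⟩, ?_⟩
      · rw [back_sdinv hlam hS ha hTp]; exact hdinv
      · intro b
        rw [← wrd_zCont hlam T, back_wrd hlam hS ha hTp]
        exact hz b
      · intro b
        rw [← wrd_wCont hlam T, back_wrd hlam hS ha hTp]
        exact hw b
      · simp only [hF]
        rw [back_std hlam hS ha hTp, back_wrd hlam hS ha hTp]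
  rw [← himg, Set.ncard_image_of_injOn (Function.Injective.injOn hFinj)]

end HHL
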